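/- arXiv:2502.15967 — 6 statements merged into one kernel-verified Lean document; each statement's English description precedes it below -/
import Mathlib

section
/- Let G be a finite group that is not a p-group, A ≤ Aut(G), and suppose there exists an element x ∈ G of prime order p such that C_G(x) is a p-group. Then Δ(G,A) is disconnected. -/
open Subgroup

/-- The A-orbit of x under a subgroup A of Aut(G). -/
def aorb {G : Type*} [Group G] (A : Subgroup (MulAut G)) (x : G) : Set G :=
  {y | ∃ a ∈ A, a x = y}

/-- The vertex set of the automorphic cyclic graph: A-orbits of nontrivial elements. -/
def DeltaVerts (G : Type*) [Group G] (A : Subgroup (MulAut G)) :=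
  {S : Set G // ∃ x : G, x ≠ 1 ∧ S = aorb A x}

/-- The automorphic cyclic graph Δ(G,A). -/
def Delta (G : Type*) [Group G] (A : Subgroup (MulAut G)) :
    SimpleGraph (DeltaVerts G A) where
  Adj S T := S ≠ T ∧ ∃ x ∈ S.1, ∃ y ∈ T.1,
    IsCyclic (Subgroup.closure {x, y} : Subgroup G)
  symm := ⟨by
    rintro S T ⟨hne, x, hx, y, hy, hc⟩
    exact ⟨hne.symm, y, hy, x, hx, by rwa [Set.pair_comm]⟩⟩
  loopless := ⟨fun S h => h.1 rfl⟩

/-- The vertex corresponding to the A-orbit of a nontrivial element x. -/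
def vtx {G : Type*} [Group G] (A : Subgroup (MulAut G)) (x : G) (hx : x ≠ 1) :
    DeltaVerts G A :=
  ⟨aorb A x, x, hx, rfl⟩

section Aux

variable {G : Type*} [Group G] [Finite G] {p : ℕ}

lemma zpowers_isCyclic (g : G) : IsCyclic ↥(zpowers g) := by
  refine ⟨⟨⟨g, mem_zpowers g⟩, fun x => ?_⟩⟩
  obtain ⟨k, hk⟩ := x.2
  exact ⟨k, Subtype.ext (by simpa using hk)⟩

/-- In a finite cyclic group, any two elements of prime order `p` generate
the same subgroup. -/
lemma mem_zpowers_of_orderOf_eq {H : Type*} [Group H] [Finite H] [IsCyclic H]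
    (hp : p.Prime) {u v : H} (hu : orderOf u = p) (hv : orderOf v = p) :
    u ∈ zpowers v := by
  classical
  have : Fintype H := Fintype.ofFinite H
  have hle := IsCyclic.card_pow_eq_one_le (α := H) (n := p) hp.pos
  set F : Finset H := Set.toFinset (zpowers v : Set H) with hF
  have hsub : F ⊆ Finset.univ.filter fun a : H => a ^ p = 1 := by
    intro a ha
    rw [hF, Set.mem_toFinset] at ha
    obtain ⟨k, hk⟩ := ha
    simp only [Finset.mem_filter, Finset.mem_univ, true_and]
    rw [← hk, ← zpow_natCast, ← zpow_mul, mul_comm, zpow_mul, zpow_natCast, ← hv,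
      pow_orderOf_eq_one, one_zpow]
  have hcard : F.card = p := by
    rw [hF, Set.toFinset_card, ← Nat.card_eq_fintype_card, SetLike.coe_sort_coe,
      Nat.card_zpowers, hv]
  have heq : F = Finset.univ.filter fun a : H => a ^ p = 1 :=
    Finset.eq_of_subset_of_card_le hsub (by omega)
  have : u ∈ F := by
    rw [heq]
    simp only [Finset.mem_filter, Finset.mem_univ, true_and, ← hu, pow_orderOf_eq_one]
  rwa [hF, Set.mem_toFinset] at this

/-- The key invariant. -/
def Pgood (p : ℕ) {G : Type*} [Group G] (g : G) : Prop :=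
  ∃ u : G, u ∈ zpowers g ∧ orderOf u = p ∧ IsPGroup p (Subgroup.centralizer {u})

lemma Pgood_apply (a : MulAut G) {g : G} (h : Pgood p g) : Pgood p (a g) := by
  obtain ⟨u, hu, hup, hC⟩ := h
  refine ⟨a u, ?_, ?_, ?_⟩
  · obtain ⟨k, hk⟩ := hu
    exact ⟨k, by rw [← hk]; exact (map_zpow a g k).symm⟩
  · rw [MulEquiv.orderOf_eq a u, hup]
  · have h1 : IsPGroup p ((centralizer {u}).comap (a⁻¹ : MulAut G).toMonoidHom) :=
      hC.comap_of_injective _ (a⁻¹ : MulAut G).injective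
    have h2 : centralizer {a u} = (centralizer {u}).comap (a⁻¹ : MulAut G).toMonoidHom := by
      ext z
      simp only [Subgroup.mem_comap, mem_centralizer_iff, Set.mem_singleton_iff,
        forall_eq, MulEquiv.coe_toMonoidHom]
      constructor
      · intro h
        have := congrArg (a⁻¹ : MulAut G) h
        simpa using this
      · intro h
        have := congrArg a h
        simpa using this
    rwa [h2]

lemma Pgood_step (hp : p.Prime) {g y : G} (hy1 : y ≠ 1)
    (hcyc : IsCyclic (Subgroup.closure {g, y} : Subgroup G)) (hg : Pgood p g) :
    Pgood p y := by
  obtain ⟨u, hu, hup, hCu⟩ := hg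
  obtain ⟨⟨c, hcK⟩, hgen⟩ := hcyc.exists_generator
  -- g and y are powers of c
  have hgK : g ∈ Subgroup.closure ({g, y} : Set G) :=
    subset_closure (by simp)
  have hyK : y ∈ Subgroup.closure ({g, y} : Set G) :=
    subset_closure (by simp)
  have hgc : g ∈ zpowers c := by
    obtain ⟨k, hk⟩ := hgen ⟨g, hgK⟩
    exact ⟨k, by simpa using congrArg (Subtype.val) hk⟩
  have hyc : y ∈ zpowers c := by
    obtain ⟨k, hk⟩ := hgen ⟨y, hyK⟩
    exact ⟨k, by simpa using congrArg (Subtype.val) hk⟩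
  have huc : u ∈ zpowers c := zpowers_le.mpr hgc hu
  -- c commutes with u, hence c is a p-element
  have hcu : c ∈ centralizer ({u} : Set G) := by
    rw [mem_centralizer_iff]
    rintro h rfl
    obtain ⟨k, hk⟩ := huc
    rw [← hk]
    show c ^ k * c = c * c ^ k
    exact ((Commute.refl c).zpow_left k).eq
  obtain ⟨n, hn⟩ := hCu ⟨c, hcu⟩
  have hcord : orderOf c ∣ p ^ n := by
    have := orderOf_dvd_of_pow_eq_one hn
    rwa [Subgroup.orderOf_mk] at this
  obtain ⟨m, _, hm⟩ := (Nat.dvd_prime_pow hp).mp hcord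
  -- work inside zpowers c
  have : IsCyclic ↥(zpowers c) := zpowers_isCyclic c
  set U : ↥(zpowers c) := ⟨u, huc⟩ with hU
  set Y : ↥(zpowers c) := ⟨y, hyc⟩ with hY
  have hUo : orderOf U = p := by rw [hU, Subgroup.orderOf_mk, hup]
  -- order of Y is a positive power of p
  have hYo : orderOf Y = orderOf y := Subgroup.orderOf_mk y hyc
  have hydvd : orderOf y ∣ p ^ m := hm ▸ orderOf_dvd_of_mem_zpowers hyc
  obtain ⟨k, hkm, hk⟩ := (Nat.dvd_prime_pow hp).mp hydvd
  have hk0 : k ≠ 0 := by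
    rintro rfl
    rw [pow_zero] at hk
    exact hy1 (orderOf_eq_one_iff.mp hk)
  -- V = Y ^ (p ^ (k-1)) has order p
  set V : ↥(zpowers c) := Y ^ (p ^ (k - 1)) with hV
  have hVo : orderOf V = p := by
    rw [hV, orderOf_pow, hYo, hk, Nat.gcd_eq_right (pow_dvd_pow p (by omega)),
      Nat.pow_div (by omega) hp.pos, show k - (k - 1) = 1 by omega, pow_one]
  have hUV : U ∈ zpowers V := mem_zpowers_of_orderOf_eq hp hUo hVo
  -- hence u ∈ zpowers y
  have huy : u ∈ zpowers y := by
    obtain ⟨t, ht⟩ := hUV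
    have ht' : V ^ t = U := ht
    have hcoe : (y ^ (p ^ (k - 1) : ℕ)) ^ t = u := by
      simpa [hV, hY, hU] using congrArg Subtype.val ht'
    refine ⟨((p ^ (k - 1) : ℕ) : ℤ) * t, ?_⟩
    show y ^ (((p ^ (k - 1) : ℕ) : ℤ) * t) = u
    rw [zpow_mul, zpow_natCast]
    exact hcoe
  exact ⟨u, huy, hup, hCu⟩

end Aux

theorem stmt2 {G : Type*} [Group G] [Finite G] (A : Subgroup (MulAut G))
    (p : ℕ) (hp : p.Prime) (hG : ¬ IsPGroup p G)
    (x : G) (hxo : orderOf x = p) (hC : IsPGroup p (Subgroup.centralizer {x})) :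
    ¬ (Delta G A).Connected := by
  classical
  have : Fact p.Prime := ⟨hp⟩
  have : Fintype G := Fintype.ofFinite G
  -- find an element of prime order q ≠ p
  have hq : ∃ q : ℕ, q.Prime ∧ q ∣ Fintype.card G ∧ q ≠ p := by
    by_contra h
    push_neg at h
    have : ∃ k, Fintype.card G = p ^ k :=
      ⟨_, Nat.eq_prime_pow_of_unique_prime_dvd Fintype.card_ne_zero
        (fun {q} hq hdvd => h q hq hdvd)⟩
    exact hG (IsPGroup.iff_card.mpr (by rwa [Nat.card_eq_fintype_card]))
  obtain ⟨q, hqp, hqdvd, hqne⟩ := hq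
  have : Fact q.Prime := ⟨hqp⟩
  obtain ⟨g, hgo⟩ := exists_prime_orderOf_dvd_card q hqdvd
  have hg1 : g ≠ 1 := by
    intro h
    rw [h, orderOf_one] at hgo
    exact hqp.one_lt.ne' hgo.symm
  have hx1 : x ≠ 1 := by
    intro h
    rw [h, orderOf_one] at hxo
    exact hp.one_lt.ne' hxo.symm
  -- the goodness invariant on vertices
  set Good : DeltaVerts G A → Prop := fun S => ∀ z ∈ S.1, Pgood p z with hGood
  -- adjacency preserves goodness
  have hstep : ∀ {S T : DeltaVerts G A}, (Delta G A).Adj S T → Good S → Good T := by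
    rintro S T ⟨-, x', hx'S, y', hy'T, hcyc⟩ hS
    obtain ⟨y₀, hy₀1, hT⟩ := T.2
    have hy'T' : y' ∈ aorb A y₀ := hT ▸ hy'T
    obtain ⟨a, -, ha⟩ := hy'T'
    have hy'1 : y' ≠ 1 := by
      rintro rfl
      exact hy₀1 (a.injective (by rw [ha, map_one]))
    have hPy' : Pgood p y' := Pgood_step hp hy'1 hcyc (hS x' hx'S)
    intro z hz
    rw [hT] at hz
    obtain ⟨b, -, hb⟩ := hz
    have : z = (b * a⁻¹ : MulAut G) y' := by
      rw [← ha, ← hb]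
      simp
    rw [this]
    exact Pgood_apply _ hPy'
  -- goodness is preserved along walks
  have hreach : ∀ {S T : DeltaVerts G A}, (Delta G A).Reachable S T → Good S → Good T := by
    intro S T hR
    obtain ⟨w⟩ := hR
    induction w with
    | nil => exact id
    | cons h w ih => exact fun hS => ih (hstep h hS)
  intro hconn
  have hR := hconn.preconnected (vtx A x hx1) (vtx A g hg1)
  have hGoodx : Good (vtx A x hx1) := by
    rintro z ⟨a, -, rfl⟩
    exact Pgood_apply a ⟨x, mem_zpowers x, hxo, hC⟩
  have hGoodg := hreach hR hGoodx
  have hgmem : g ∈ (vtx A g hg1).1 := ⟨1, one_mem A, by simp⟩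
  obtain ⟨u, hu, hup, -⟩ := hGoodg g hgmem
  have : orderOf u ∣ q := hgo ▸ orderOf_dvd_of_mem_zpowers hu
  rw [hup] at this
  exact hqne ((Nat.prime_dvd_prime_iff_eq hp hqp).mp this).symm
end

section
/- Let G be a finite p-group, A ≤ Aut(G). If x and y are nontrivial elements of G whose orbits x^A and y^A lie in the same connected component of Δ(G,A), then the unique subgroup of order p contained in ⟨x⟩ is A-conjugate to the unique subgroup of order p contained in ⟨y⟩. Consequently, the connected components of Δ(G,A) are in one-to-one correspondence with the A-orbits on the set of subgroups of G of order p. -/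
open Subgroup

section Aux

variable {G : Type*} [Group G]

instance isCyclic_zpowers (x : G) : IsCyclic (Subgroup.zpowers x) :=
  ⟨⟨⟨x, Subgroup.mem_zpowers x⟩, by
    rintro ⟨y, n, rfl⟩
    exact ⟨n, by ext; simp⟩⟩⟩

/-- uniqueness of an order-p subgroup inside a cyclic subgroup -/
lemma uniq_in_cyclic [Finite G] {p : ℕ} (hp : p.Prime)
    {C P Q : Subgroup G} (hC : IsCyclic C) (hPC : P ≤ C) (hQC : Q ≤ C)
    (hP : Nat.card P = p) (hQ : Nat.card Q = p) : P = Q := by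
  classical
  have : Fintype C := Fintype.ofFinite _
  have key : ∀ R : Subgroup G, R ≤ C → Nat.card R = p →
      ((R.subgroupOf C : Set C)) = {a : C | a ^ p = 1} := by
    intro R hRC hR
    have hcard : Nat.card (R.subgroupOf C) = p := by
      rw [← hR]
      exact Nat.card_congr (Subgroup.subgroupOfEquivOfLe hRC).toEquiv
    apply Set.eq_of_subset_of_ncard_le
    · intro a ha
      have : (⟨a, ha⟩ : R.subgroupOf C) ^ p = 1 := by
        rw [← hcard]; exact pow_card_eq_one'
      simpa [Subtype.ext_iff] using this
    · have h1 : ({a : C | a ^ p = 1} : Set C).ncard ≤ p := by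
        rw [Set.ncard_eq_toFinset_card', Set.toFinset_setOf]
        exact IsCyclic.card_pow_eq_one_le hp.pos
      have h2 : ((R.subgroupOf C : Set C)).ncard = p := by
        rw [← Nat.card_coe_set_eq, SetLike.coe_sort_coe, hcard]
      omega
    · exact Set.toFinite _
  have := (key P hPC hP).trans (key Q hQC hQ).symm
  have hPQ : P.subgroupOf C = Q.subgroupOf C := SetLike.coe_injective this
  have : (P.subgroupOf C).map C.subtype = (Q.subgroupOf C).map C.subtype := by rw [hPQ]
  rwa [Subgroup.subgroupOf_map_subtype, Subgroup.subgroupOf_map_subtype,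
    inf_eq_left.mpr hPC, inf_eq_left.mpr hQC] at this

lemma exists_socle [Finite G] {p : ℕ} (hp : p.Prime)
    (hG : IsPGroup p G) {x : G} (hx : x ≠ 1) :
    ∃ P : Subgroup G, P ≤ Subgroup.zpowers x ∧ Nat.card P = p := by
  haveI : Fact p.Prime := ⟨hp⟩
  have hdvd : p ∣ Nat.card (Subgroup.zpowers x) := by
    rw [Nat.card_zpowers]
    obtain ⟨k, hk⟩ := IsPGroup.iff_orderOf.mp hG x
    rcases Nat.eq_zero_or_pos k with rfl | hk0
    · rw [pow_zero, orderOf_eq_one_iff] at hk; exact absurd hk hx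
    · exact hk ▸ dvd_pow_self p hk0.ne'
  obtain ⟨g, hg⟩ := exists_prime_orderOf_dvd_card' (G := Subgroup.zpowers x) p hdvd
  refine ⟨Subgroup.zpowers (g : G), ?_, ?_⟩
  · rw [Subgroup.zpowers_le]; exact g.2
  · rw [Nat.card_zpowers, ← hg]
    exact orderOf_coe g

variable {A : Subgroup (MulAut G)}

/-- A-conjugacy of subgroups. -/
def ACon (A : Subgroup (MulAut G)) (P Q : Subgroup G) : Prop :=
  ∃ a ∈ A, Subgroup.map a.toMonoidHom P = Q

lemma map_one_aut (P : Subgroup G) : Subgroup.map (1 : MulAut G).toMonoidHom P = P := by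
  have : (1 : MulAut G).toMonoidHom = MonoidHom.id G := rfl
  rw [this, Subgroup.map_id]

lemma map_mul_aut (a b : MulAut G) (P : Subgroup G) :
    (P.map b.toMonoidHom).map a.toMonoidHom = P.map (a * b).toMonoidHom := by
  rw [Subgroup.map_map]; rfl

lemma ACon.rfl (P : Subgroup G) : ACon A P P := ⟨1, one_mem A, map_one_aut P⟩

lemma ACon.trans {P Q R : Subgroup G} (h1 : ACon A P Q) (h2 : ACon A Q R) : ACon A P R := by
  obtain ⟨a, ha, rfl⟩ := h1
  obtain ⟨b, hb, rfl⟩ := h2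
  exact ⟨b * a, mul_mem hb ha, (map_mul_aut b a P).symm⟩

lemma ACon.symm {P Q : Subgroup G} (h : ACon A P Q) : ACon A Q P := by
  obtain ⟨a, ha, rfl⟩ := h
  exact ⟨a⁻¹, inv_mem ha, by rw [map_mul_aut, inv_mul_cancel, map_one_aut]⟩

lemma card_map_aut (a : MulAut G) (P : Subgroup G) :
    Nat.card (P.map a.toMonoidHom) = Nat.card P :=
  Nat.card_congr (P.equivMapOfInjective _ a.injective).toEquiv.symm

lemma mem_aorb_self (A : Subgroup (MulAut G)) (x : G) : x ∈ aorb A x := ⟨1, one_mem A, rfl⟩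

lemma aorb_eq_of_mem {x y : G} (h : y ∈ aorb A x) : aorb A y = aorb A x := by
  obtain ⟨a, ha, rfl⟩ := h
  ext z
  constructor
  · rintro ⟨b, hb, rfl⟩
    exact ⟨b * a, mul_mem hb ha, rfl⟩
  · rintro ⟨b, hb, rfl⟩
    exact ⟨b * a⁻¹, mul_mem hb (inv_mem ha), by simp⟩

lemma ne_one_of_mem_vert (S : DeltaVerts G A) {z : G} (hz : z ∈ S.1) : z ≠ 1 := by
  obtain ⟨x, hx, hS⟩ := S.2
  rw [hS] at hz
  obtain ⟨a, ha, rfl⟩ := hz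
  intro h
  exact hx (a.injective (by rw [h, map_one]))

lemma mem_aorb_of_mem_vert {S : DeltaVerts G A} {x y : G} (hx : x ∈ S.1) (hy : y ∈ S.1) :
    y ∈ aorb A x := by
  obtain ⟨x0, _, hS⟩ := S.2
  rw [hS] at hx hy
  rw [aorb_eq_of_mem hx]
  exact hy

/-- Same-orbit case: order-p subgroups under generators in the same orbit are A-conjugate. -/
lemma acon_of_mem_aorb [Finite G] {p : ℕ} (hp : p.Prime) {x y : G} (h : y ∈ aorb A x)
    {P Q : Subgroup G} (hP : P ≤ zpowers x) (hPc : Nat.card P = p)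
    (hQ : Q ≤ zpowers y) (hQc : Nat.card Q = p) : ACon A P Q := by
  obtain ⟨a, ha, rfl⟩ := h
  refine ⟨a, ha, ?_⟩
  refine uniq_in_cyclic hp (C := zpowers (a x)) (_root_.isCyclic_zpowers _) ?_ hQ ?_ hQc
  · refine le_trans (Subgroup.map_mono hP) ?_
    rw [MonoidHom.map_zpowers, MulEquiv.coe_toMonoidHom]
  · rw [card_map_aut, hPc]

/-- Adjacency case: if ⟨x,y⟩ is cyclic, order-p subgroups of ⟨x⟩, ⟨y⟩ coincide. -/
lemma eq_of_cyclic_closure [Finite G] {p : ℕ} (hp : p.Prime) {x y : G}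
    (hc : IsCyclic (Subgroup.closure {x, y} : Subgroup G))
    {P Q : Subgroup G} (hP : P ≤ zpowers x) (hPc : Nat.card P = p)
    (hQ : Q ≤ zpowers y) (hQc : Nat.card Q = p) : P = Q := by
  refine uniq_in_cyclic hp (C := Subgroup.closure {x, y}) hc ?_ ?_ hPc hQc
  · exact hP.trans (zpowers_le.mpr (Subgroup.subset_closure (by simp)))
  · exact hQ.trans (zpowers_le.mpr (Subgroup.subset_closure (by simp)))

lemma walk_key [Finite G] {p : ℕ} (hp : p.Prime) (hG : IsPGroup p G)
    {S T : DeltaVerts G A} (w : (Delta G A).Walk S T) :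
    ∀ x ∈ S.1, ∀ y ∈ T.1, ∀ P Q : Subgroup G, P ≤ zpowers x → Nat.card P = p →
      Q ≤ zpowers y → Nat.card Q = p → ACon A P Q := by
  induction w with
  | nil =>
    intro x hx y hy P Q hP hPc hQ hQc
    exact acon_of_mem_aorb hp (mem_aorb_of_mem_vert hx hy) hP hPc hQ hQc
  | cons h w ih =>
    intro x hx y hy P Q hP hPc hQ hQc
    obtain ⟨-, x', hx', y', hy', hcyc⟩ := h
    obtain ⟨P', hP', hP'c⟩ := exists_socle hp hG (ne_one_of_mem_vert _ hx')
    obtain ⟨Q', hQ', hQ'c⟩ := exists_socle hp hG (ne_one_of_mem_vert _ hy')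
    have h1 : ACon A P P' := acon_of_mem_aorb hp (mem_aorb_of_mem_vert hx hx') hP hPc hP' hP'c
    have h2 : P' = Q' := eq_of_cyclic_closure hp hcyc hP' hP'c hQ' hQ'c
    have h3 : ACon A Q' Q := ih y' hy' y hy Q' Q hQ' hQ'c hQ hQc
    exact h1.trans (h2 ▸ h3)

lemma reach_of_mem_zpowers {x w : G} (hx : x ≠ 1) (hw : w ≠ 1)
    (h : w ∈ zpowers x) : (Delta G A).Reachable (vtx A x hx) (vtx A w hw) := by
  by_cases he : vtx A x hx = vtx A w hw
  · rw [he]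
  · refine SimpleGraph.Adj.reachable ⟨he, x, mem_aorb_self A x, w, mem_aorb_self A w, ?_⟩
    have hcl : (Subgroup.closure {x, w} : Subgroup G) = zpowers x := by
      apply le_antisymm
      · rw [Subgroup.closure_le]
        rw [Set.insert_subset_iff]
        exact ⟨Subgroup.mem_zpowers x, by simpa using h⟩
      · exact zpowers_le.mpr (Subgroup.subset_closure (by simp))
    rw [hcl]
    exact _root_.isCyclic_zpowers x

lemma reach_of_acon [Finite G] {p : ℕ} (hp : p.Prime) {x y : G} (hx : x ≠ 1) (hy : y ≠ 1)
    {P Q : Subgroup G} (hP : P ≤ zpowers x) (hPc : Nat.card P = p)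
    (hQ : Q ≤ zpowers y) (hQc : Nat.card Q = p)
    (h : ACon A P Q) : (Delta G A).Reachable (vtx A x hx) (vtx A y hy) := by
  obtain ⟨a, ha, rfl⟩ := h
  have hnt : Nontrivial (P.map a.toMonoidHom) := by
    rw [← Finite.one_lt_card_iff_nontrivial, hQc]
    exact hp.one_lt
  obtain ⟨z, hzQ, hz1⟩ := Subgroup.exists_ne_one_of_nontrivial (P.map a.toMonoidHom)
  obtain ⟨w, hwP, rfl⟩ := Subgroup.mem_map.mp hzQ
  have hw1 : w ≠ 1 := fun hh => hz1 (by rw [hh]; exact map_one _)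
  have r1 : (Delta G A).Reachable (vtx A x hx) (vtx A w hw1) :=
    reach_of_mem_zpowers hx hw1 (hP hwP)
  have r2 : (Delta G A).Reachable (vtx A y hy) (vtx A (a w) hz1) :=
    reach_of_mem_zpowers hy hz1 (hQ hzQ)
  have hveq : vtx A w hw1 = vtx A (a w) hz1 :=
    Subtype.ext (aorb_eq_of_mem (⟨a, ha, rfl⟩ : a w ∈ aorb A w)).symm
  exact r1.trans (hveq ▸ r2.symm)

/-- The A-orbit of a subgroup. -/
def AOrb (A : Subgroup (MulAut G)) (S : Subgroup G) : Set (Subgroup G) :=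
  {T | ∃ a ∈ A, Subgroup.map a.toMonoidHom S = T}

lemma mem_AOrb_self (S : Subgroup G) : S ∈ AOrb A S := ⟨1, one_mem A, map_one_aut S⟩

lemma AOrb_eq_of_acon {P Q : Subgroup G} (h : ACon A P Q) : AOrb A P = AOrb A Q := by
  ext T
  exact ⟨fun hT => h.symm.trans hT, fun hT => h.trans hT⟩

end Aux

theorem stmt5 {G : Type*} [Group G] [Finite G] (A : Subgroup (MulAut G))
    (p : ℕ) (hp : p.Prime) (hG : IsPGroup p G) :
    (∀ (x y : G) (hx : x ≠ 1) (hy : y ≠ 1),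
        (Delta G A).Reachable (vtx A x hx) (vtx A y hy) →
        ∀ P Q : Subgroup G, P ≤ Subgroup.zpowers x → Nat.card P = p →
          Q ≤ Subgroup.zpowers y → Nat.card Q = p →
          ∃ a ∈ A, Subgroup.map a.toMonoidHom P = Q) ∧
      Nonempty ((Delta G A).ConnectedComponent ≃
        {O : Set (Subgroup G) | ∃ S : Subgroup G, Nat.card S = p ∧
          O = {T | ∃ a ∈ A, Subgroup.map a.toMonoidHom S = T}}) := by
  classical
  have key : ∀ (x y : G) (hx : x ≠ 1) (hy : y ≠ 1),
      (Delta G A).Reachable (vtx A x hx) (vtx A y hy) →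
      ∀ P Q : Subgroup G, P ≤ Subgroup.zpowers x → Nat.card P = p →
        Q ≤ Subgroup.zpowers y → Nat.card Q = p →
        ∃ a ∈ A, Subgroup.map a.toMonoidHom P = Q := by
    intro x y hx hy h P Q hP hPc hQ hQc
    obtain ⟨w⟩ := h
    exact walk_key hp hG w x (mem_aorb_self A x) y (mem_aorb_self A y) P Q hP hPc hQ hQc
  refine ⟨key, ?_⟩
  -- choose for each vertex a representative and a socle
  have hsel : ∀ S : DeltaVerts G A, ∃ x : G, ∃ P : Subgroup G,
      x ≠ 1 ∧ S.1 = aorb A x ∧ P ≤ zpowers x ∧ Nat.card P = p := by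
    intro S
    obtain ⟨x, hx, hS⟩ := S.2
    obtain ⟨P, hP, hPc⟩ := exists_socle hp hG hx
    exact ⟨x, P, hx, hS, hP, hPc⟩
  choose xof Pof hx1 hSeq hPle hPcard using hsel
  have hveq : ∀ S : DeltaVerts G A, vtx A (xof S) (hx1 S) = S :=
    fun S => Subtype.ext (hSeq S).symm
  have f0compat : ∀ (S T : DeltaVerts G A) (w : (Delta G A).Walk S T), w.IsPath →
      AOrb A (Pof S) = AOrb A (Pof T) := by
    intro S T w _
    have hr : (Delta G A).Reachable (vtx A (xof S) (hx1 S)) (vtx A (xof T) (hx1 T)) := by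
      rw [hveq S, hveq T]; exact w.reachable
    exact AOrb_eq_of_acon
      (key _ _ _ _ hr (Pof S) (Pof T) (hPle S) (hPcard S) (hPle T) (hPcard T))
  set F : (Delta G A).ConnectedComponent → Set (Subgroup G) :=
    SimpleGraph.ConnectedComponent.lift (fun S => AOrb A (Pof S)) f0compat with hF
  have hFmk : ∀ S : DeltaVerts G A, F ((Delta G A).connectedComponentMk S) = AOrb A (Pof S) :=
    fun S => rfl
  have hFmem : ∀ c, F c ∈ {O : Set (Subgroup G) | ∃ S : Subgroup G, Nat.card S = p ∧
      O = {T | ∃ a ∈ A, Subgroup.map a.toMonoidHom S = T}} := by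
    refine SimpleGraph.ConnectedComponent.ind ?_
    intro S
    exact ⟨Pof S, hPcard S, rfl⟩
  refine ⟨Equiv.ofBijective (fun c => ⟨F c, hFmem c⟩) ⟨?_, ?_⟩⟩
  · -- injective
    intro c d h
    have h' : F c = F d := congrArg Subtype.val h
    revert h'
    refine SimpleGraph.ConnectedComponent.ind₂ ?_ c d
    intro S T hST
    rw [hFmk, hFmk] at hST
    have hac : ACon A (Pof S) (Pof T) := by
      have := mem_AOrb_self (A := A) (Pof T)
      rw [← hST] at this
      exact this
    have hr := reach_of_acon hp (hx1 S) (hx1 T) (hPle S) (hPcard S) (hPle T) (hPcard T) hac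
    rw [hveq S, hveq T] at hr
    exact SimpleGraph.ConnectedComponent.sound hr
  · -- surjective
    rintro ⟨O, S, hSc, rfl⟩
    have hnt : Nontrivial S := by
      rw [← Finite.one_lt_card_iff_nontrivial, hSc]; exact hp.one_lt
    obtain ⟨z, hzS, hz1⟩ := Subgroup.exists_ne_one_of_nontrivial S
    have hle : zpowers z ≤ S := zpowers_le.mpr hzS
    have hord : Nat.card (zpowers z) = p := by
      rw [Nat.card_zpowers]
      have hdvd : orderOf z ∣ p := hSc ▸ Subgroup.orderOf_dvd_natCard S hzS
      rcases (Nat.dvd_prime hp).mp hdvd with h1 | h1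
      · exact absurd (orderOf_eq_one_iff.mp h1) hz1
      · exact h1
    have hSz : S = zpowers z := by
      refine (Subgroup.eq_of_le_of_card_ge hle ?_).symm
      rw [hSc, hord]
    refine ⟨(Delta G A).connectedComponentMk (vtx A z hz1), ?_⟩
    refine Subtype.ext ?_
    have hr : (Delta G A).Reachable (vtx A (xof (vtx A z hz1)) (hx1 (vtx A z hz1)))
        (vtx A z hz1) := by rw [hveq (vtx A z hz1)]
    have hac := key _ _ _ _ hr (Pof (vtx A z hz1)) S (hPle _) (hPcard _)
      (hSz ▸ le_rfl) hSc
    calc F ((Delta G A).connectedComponentMk (vtx A z hz1))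
        = AOrb A (Pof (vtx A z hz1)) := hFmk _
      _ = AOrb A S := AOrb_eq_of_acon hac
end

section
/- Let G be a finite group with A ≤ Aut(G), and suppose Z(G) is a nontrivial p-group for some prime p. If for every element x of order p in G the centralizer C_G(x) is not a p-group, then Δ(G,A) is connected with diameter at most 6. -/
open Subgroup

lemma zpowers_cyclic {G : Type*} [Group G] (g : G) : IsCyclic (zpowers g) := by
  constructor
  refine ⟨⟨g, mem_zpowers g⟩, ?_⟩
  rintro ⟨x, k, rfl⟩
  exact ⟨k, Subtype.ext (by simp)⟩

/-- commuting elements of coprime (finite) orders generate a cyclic group -/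
lemma cyclic_of_commute_coprime {G : Type*} [Group G] [Finite G] {a b : G}
    (h : Commute a b) (hco : (orderOf a).Coprime (orderOf b)) :
    IsCyclic (closure ({a, b} : Set G)) := by
  have hmem : ∀ c d : G, Commute c d → (orderOf c).Coprime (orderOf d) →
      c ∈ zpowers (c * d) := by
    intro c d hcd hco'
    obtain ⟨hm1, hm2⟩ := (Nat.chineseRemainder hco' 1 0).2
    set m := ((Nat.chineseRemainder hco' 1 0) : ℕ) with hmdef
    refine ⟨(m : ℤ), ?_⟩
    show (c * d) ^ (m : ℤ) = c
    rw [zpow_natCast, hcd.mul_pow]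
    have h1 : c ^ m = c ^ 1 := pow_eq_pow_iff_modEq.mpr hm1
    have h2 : d ^ m = d ^ 0 := pow_eq_pow_iff_modEq.mpr hm2
    rw [h1, h2, pow_one, pow_zero, mul_one]
  have ha : a ∈ zpowers (a * b) := hmem a b h hco
  have hb : b ∈ zpowers (a * b) := by
    have := hmem b a h.symm hco.symm
    rwa [← h.eq] at this
  have hle : closure ({a, b} : Set G) ≤ zpowers (a * b) := by
    rw [closure_le]
    rintro x (rfl | rfl)
    exacts [ha, hb]
  have hge : zpowers (a * b) ≤ closure ({a, b} : Set G) := by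
    rw [zpowers_eq_closure, closure_le]
    intro y hy
    rw [Set.mem_singleton_iff] at hy
    subst hy
    exact mul_mem (subset_closure (by simp)) (subset_closure (by simp))
  rw [le_antisymm hle hge]
  exact zpowers_cyclic _

/-- x together with a power of x generate a cyclic group -/
lemma cyclic_pair_pow {G : Type*} [Group G] (x : G) (k : ℕ) :
    IsCyclic (closure ({x, x ^ k} : Set G)) := by
  have : closure ({x, x ^ k} : Set G) = zpowers x := by
    apply le_antisymm
    · rw [closure_le]
      rintro y hy
      rcases hy with h | h <;> rw [h]
      · exact mem_zpowers x
      · exact pow_mem (mem_zpowers x) k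
    · rw [zpowers_eq_closure, closure_le]
      intro y hy
      rw [Set.mem_singleton_iff] at hy
      subst hy
      exact subset_closure (by simp)
  rw [this]
  exact zpowers_cyclic _

lemma self_mem_aorb {G : Type*} [Group G] (A : Subgroup (MulAut G)) (x : G) :
    x ∈ aorb A x := ⟨1, A.one_mem, rfl⟩

/-- One step in the graph: cyclic joint closure gives a walk of length ≤ 1. -/
lemma walk_le_one {G : Type*} [Group G] (A : Subgroup (MulAut G)) {x y : G}
    (hx : x ≠ 1) (hy : y ≠ 1) (hc : IsCyclic (closure ({x, y} : Set G))) :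
    ∃ w : (Delta G A).Walk (vtx A x hx) (vtx A y hy), w.length ≤ 1 := by
  by_cases h : vtx A x hx = vtx A y hy
  · exact ⟨(SimpleGraph.Walk.nil).copy rfl h, by simp⟩
  · exact ⟨SimpleGraph.Walk.cons
      ⟨h, x, self_mem_aorb A x, y, self_mem_aorb A y, hc⟩ SimpleGraph.Walk.nil, le_rfl⟩

theorem stmt8 {G : Type*} [Group G] [Finite G] (A : Subgroup (MulAut G))
    (p : ℕ) (hp : p.Prime) (hZ : IsPGroup p (Subgroup.center G))
    (hZnt : Nontrivial (Subgroup.center G))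
    (hcent : ∀ x : G, orderOf x = p → ¬ IsPGroup p (Subgroup.centralizer {x})) :
    (Delta G A).Connected ∧ ∀ u v : DeltaVerts G A, (Delta G A).dist u v ≤ 6 := by
  -- find a central element z of order p
  obtain ⟨g, hg1⟩ := exists_ne (1 : center G)
  have hgG1 : (g : G) ≠ 1 := by
    intro h
    exact hg1 (Subtype.ext (h.trans (Subgroup.coe_one _).symm))
  obtain ⟨k, hk⟩ := hZ g
  have hdvd : orderOf (g : G) ∣ p ^ k := by
    apply orderOf_dvd_of_pow_eq_one
    have h := congrArg (Subtype.val) hk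
    rw [SubgroupClass.coe_pow] at h
    exact h
  obtain ⟨j, _, hj⟩ := (Nat.dvd_prime_pow hp).mp hdvd
  have hord_ne : orderOf (g : G) ≠ 0 := by
    rw [hj]; exact pow_ne_zero _ hp.ne_zero
  have hpdvd : p ∣ orderOf (g : G) := by
    rcases Nat.eq_zero_or_pos j with rfl | hjpos
    · exfalso; apply hgG1; rw [← orderOf_eq_one_iff, hj, pow_zero]
    · rw [hj]; exact dvd_pow_self p hjpos.ne'
  set z : G := (g : G) ^ (orderOf (g : G) / p) with hzdef
  have hzord : orderOf z = p := orderOf_pow_orderOf_div hord_ne hpdvd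
  have hz1 : z ≠ 1 := by
    intro h; rw [← orderOf_eq_one_iff] at h; rw [hzord] at h; exact hp.ne_one h
  have hzc : ∀ w : G, Commute w z := by
    intro w
    have hzm : z ∈ center G := by
      rw [hzdef]; exact pow_mem g.2 _
    exact (Subgroup.mem_center_iff.mp hzm w)
  -- every vertex has a walk of length ≤ 3 to vtx z
  have key : ∀ S : DeltaVerts G A,
      ∃ w : (Delta G A).Walk S (vtx A z hz1), w.length ≤ 3 := by
    intro S
    obtain ⟨x, hx, hS⟩ := S.2
    have hSv : S = vtx A x hx := Subtype.ext hS
    subst hSv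
    set n := orderOf x with hndef
    have hn0 : n ≠ 0 := (orderOf_pos x).ne'
    have hn1 : n ≠ 1 := by rwa [hndef, Ne, orderOf_eq_one_iff]
    set q := n.minFac with hqdef
    have hq : q.Prime := Nat.minFac_prime hn1
    set x' : G := x ^ (n / q) with hx'def
    have hx'ord : orderOf x' = q := orderOf_pow_orderOf_div hn0 (Nat.minFac_dvd n)
    have hx'1 : x' ≠ 1 := by
      intro h; rw [← orderOf_eq_one_iff] at h; rw [hx'ord] at h; exact hq.ne_one h
    obtain ⟨w1, hw1⟩ := walk_le_one A hx hx'1 (cyclic_pair_pow x (n / q))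
    by_cases hqp : q = p
    · -- use centralizer of x'
      have hnotp := hcent x' (hx'ord.trans hqp)
      rw [IsPGroup] at hnotp
      push_neg at hnotp
      obtain ⟨c, hc⟩ := hnotp
      set m := orderOf (c : G) with hmdef
      have hm0 : m ≠ 0 := (orderOf_pos (c : G)).ne'
      have hrex : ∃ r : ℕ, r.Prime ∧ r ∣ m ∧ r ≠ p := by
        by_contra hcon
        push_neg at hcon
        have : m = p ^ m.primeFactorsList.length :=
          Nat.eq_prime_pow_of_unique_prime_dvd hm0
            (fun {d} hd hdvd => hcon d hd hdvd)
        have hone : (c : G) ^ p ^ m.primeFactorsList.length = 1 := by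
          rw [← this]; exact pow_orderOf_eq_one _
        apply hc m.primeFactorsList.length
        ext
        simpa using hone
      obtain ⟨r, hr, hrdvd, hrp⟩ := hrex
      set y : G := (c : G) ^ (m / r) with hydef
      have hyord : orderOf y = r := orderOf_pow_orderOf_div hm0 hrdvd
      have hy1 : y ≠ 1 := by
        intro h; rw [← orderOf_eq_one_iff] at h; rw [hyord] at h; exact hr.ne_one h
      have hcomm : Commute x' (c : G) := by
        have := c.2
        rw [Subgroup.mem_centralizer_iff] at this
        exact (this x' rfl)
      have hcomm' : Commute x' y := hcomm.pow_right _
      have hco1 : (orderOf x').Coprime (orderOf y) := by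
        rw [hx'ord, hyord, hqp]
        exact (Nat.coprime_primes hp hr).mpr (Ne.symm hrp)
      obtain ⟨w2, hw2⟩ := walk_le_one A hx'1 hy1 (cyclic_of_commute_coprime hcomm' hco1)
      have hco2 : (orderOf y).Coprime (orderOf z) := by
        rw [hyord, hzord]
        exact (Nat.coprime_primes hr hp).mpr hrp
      obtain ⟨w3, hw3⟩ := walk_le_one A hy1 hz1 (cyclic_of_commute_coprime (hzc y).symm.symm hco2)
      refine ⟨w1.append (w2.append w3), ?_⟩
      simp only [SimpleGraph.Walk.length_append]
      omega
    · -- x' connects directly to z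
      have hco : (orderOf x').Coprime (orderOf z) := by
        rw [hx'ord, hzord]
        exact (Nat.coprime_primes hq hp).mpr hqp
      obtain ⟨w2, hw2⟩ := walk_le_one A hx'1 hz1 (cyclic_of_commute_coprime (hzc x').symm.symm hco)
      refine ⟨w1.append w2, ?_⟩
      simp only [SimpleGraph.Walk.length_append]
      omega
  have hne : Nonempty (DeltaVerts G A) := ⟨vtx A z hz1⟩
  constructor
  · refine SimpleGraph.Connected.mk ?_
    intro u v
    obtain ⟨wu, _⟩ := key u
    obtain ⟨wv, _⟩ := key v
    exact SimpleGraph.Walk.reachable (wu.append wv.reverse)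
  · intro u v
    obtain ⟨wu, hwu⟩ := key u
    obtain ⟨wv, hwv⟩ := key v
    have := SimpleGraph.dist_le (wu.append wv.reverse)
    rw [SimpleGraph.Walk.length_append, SimpleGraph.Walk.length_reverse] at this
    omega
end

section
/- Let G be a finite group, A ≤ Aut(G), and x ∈ G \ {1} such that the conjugacy class x^G is A-invariant (e.g. if A ≤ Inn(G)). If x^A is a universal vertex of Δ(G,A), then ⟨x,y⟩ is cyclic for every y ∈ G (i.e., x ∈ K(G)). -/
open Subgroup MulAction

theorem my_isCyclic_zpowers {G : Type*} [Group G] (x : G) :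
    IsCyclic (Subgroup.zpowers x) := by
  refine ⟨⟨⟨x, Subgroup.mem_zpowers x⟩, ?_⟩⟩
  rintro ⟨z, hz⟩
  obtain ⟨k, hk⟩ := Subgroup.mem_zpowers_iff.mp hz
  exact Subgroup.mem_zpowers_iff.mpr ⟨k, Subtype.ext (by simpa using hk)⟩

theorem my_cover {G : Type*} [Group G] [Finite G] (H : Subgroup G)
    (h : ∀ y : G, ∃ g : G, g⁻¹ * y * g ∈ H) : H = ⊤ := by
  classical
  by_contra hne
  obtain ⟨z, hz⟩ : ∃ z : G, z ∉ H := by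
    by_contra hall
    push_neg at hall
    exact hne ((Subgroup.eq_top_iff' H).mpr hall)
  have hnt : Nontrivial (G ⧸ H) :=
    ⟨⟨(z : G ⧸ H), ((1 : G) : G ⧸ H), fun hc => hz (by
      simpa using H.inv_mem (QuotientGroup.eq.mp hc))⟩⟩
  letI : Fintype G := Fintype.ofFinite G
  letI : Fintype (G ⧸ H) := Fintype.ofFinite _
  letI : ∀ a : G, Fintype (MulAction.fixedBy (G ⧸ H) a) := fun a => Fintype.ofFinite _
  letI : Fintype (Quotient (MulAction.orbitRel G (G ⧸ H))) := Fintype.ofFinite _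
  have hb := MulAction.sum_card_fixedBy_eq_card_orbits_mul_card_group G (G ⧸ H)
  have hΩ : Fintype.card (Quotient (MulAction.orbitRel G (G ⧸ H))) = 1 := by
    rw [Fintype.card_eq_one_iff]
    refine ⟨⟦((1 : G) : G ⧸ H)⟧, ?_⟩
    rintro ⟨q⟩
    obtain ⟨g, hg⟩ := MulAction.exists_smul_eq G ((1 : G) : G ⧸ H) q
    exact Quotient.sound ⟨g, hg⟩
  have hle : ∀ a : G, 1 ≤ Fintype.card (MulAction.fixedBy (G ⧸ H) a) := by
    intro a
    rw [Nat.succ_le_iff, Fintype.card_pos_iff]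
    obtain ⟨g, hg⟩ := h a
    refine ⟨⟨((g : G) : G ⧸ H), ?_⟩⟩
    show a • ((g : G) : G ⧸ H) = ((g : G) : G ⧸ H)
    have : a • ((g : G) : G ⧸ H) = ((a * g : G) : G ⧸ H) := rfl
    rw [this, QuotientGroup.eq]
    simpa [mul_assoc] using H.inv_mem hg
  have hone : 1 < Fintype.card (MulAction.fixedBy (G ⧸ H) (1 : G)) := by
    rw [Fintype.one_lt_card_iff_nontrivial]
    obtain ⟨p, q, hpq⟩ := hnt
    exact ⟨⟨p, one_smul _ p⟩, ⟨q, one_smul _ q⟩,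
      fun hc => hpq (congrArg Subtype.val hc)⟩
  have hlt : ∑ _a : G, 1 < ∑ a : G, Fintype.card (MulAction.fixedBy (G ⧸ H) a) :=
    Finset.sum_lt_sum (fun i _ => hle i) ⟨1, Finset.mem_univ 1, hone⟩
  rw [hb, hΩ, one_mul] at hlt
  simp at hlt

theorem my_map {G : Type*} [Group G] (e : MulAut G) {u v : G}
    (h : IsCyclic (Subgroup.closure {u, v} : Subgroup G)) :
    IsCyclic (Subgroup.closure {e u, e v} : Subgroup G) := by
  haveI := h
  have heq : (Subgroup.closure {u, v}).map e.toMonoidHom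
      = Subgroup.closure {e u, e v} := by
    rw [MonoidHom.map_closure]
    congr 1
    simp [Set.image_pair]
  have e2 := (Subgroup.closure {u, v} : Subgroup G).equivMapOfInjective
    e.toMonoidHom e.injective
  rw [heq] at e2
  exact isCyclic_of_surjective e2 e2.surjective

theorem my_comm {G : Type*} [Group G] {u v : G}
    (h : IsCyclic (Subgroup.closure {u, v} : Subgroup G)) : u * v = v * u := by
  haveI := h
  letI := IsCyclic.commGroup (α := (Subgroup.closure {u, v} : Subgroup G))
  have hu : u ∈ Subgroup.closure ({u, v} : Set G) :=
    Subgroup.subset_closure (by simp)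
  have hv : v ∈ Subgroup.closure ({u, v} : Set G) :=
    Subgroup.subset_closure (by simp)
  have := mul_comm (⟨u, hu⟩ : Subgroup.closure ({u, v} : Set G)) ⟨v, hv⟩
  exact Subtype.ext_iff.mp this

open Subgroup

theorem stmt11 {G : Type*} [Group G] [Finite G] (A : Subgroup (MulAut G))
    (x : G) (hx : x ≠ 1)
    (hinv : ∀ a ∈ A, ∃ g : G, a x = g⁻¹ * x * g)
    (huniv : ∀ T : DeltaVerts G A, T ≠ vtx A x hx → (Delta G A).Adj (vtx A x hx) T) :
    ∀ y : G, IsCyclic (Subgroup.closure {x, y} : Subgroup G) := by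
  classical
  -- Step 1: every element of G has a conjugate centralizing x.
  have hcent : ∀ y : G, ∃ g : G, g⁻¹ * y * g ∈ Subgroup.centralizer {x} := by
    intro y
    by_cases hy1 : y = 1
    · exact ⟨1, by simp [hy1, Subgroup.one_mem]⟩
    by_cases hT : vtx A y hy1 = vtx A x hx
    · -- y lies in the A-orbit of x, hence is conjugate to x
      have hy : y ∈ aorb A x := by
        have h0 : y ∈ aorb A y := ⟨1, A.one_mem, rfl⟩
        have hset : aorb A y = aorb A x := congrArg Subtype.val hT
        rwa [hset] at h0
      obtain ⟨a, ha, hax⟩ := hy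
      obtain ⟨g, hg⟩ := hinv a ha
      refine ⟨g⁻¹, ?_⟩
      have hyx : g⁻¹⁻¹ * y * g⁻¹ = x := by
        rw [← hax, hg]; group
      rw [hyx, Subgroup.mem_centralizer_iff]
      rintro z hz
      rw [Set.mem_singleton_iff] at hz
      rw [hz]
    · obtain ⟨hne, x', hx'mem, y', hy'mem, hcyc⟩ := huniv (vtx A y hy1) hT
      obtain ⟨a, ha, hax⟩ := hx'mem
      obtain ⟨b, hb, hby⟩ := hy'mem
      have hcyc2 : IsCyclic
          (Subgroup.closure {(b⁻¹ : MulAut G) x', (b⁻¹ : MulAut G) y'} : Subgroup G) :=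
        my_map b⁻¹ hcyc
      have hcomm := my_comm hcyc2
      have h1 : (b⁻¹ : MulAut G) y' = y := by
        rw [← hby]; simp
      have h2 : (b⁻¹ : MulAut G) x' = (b⁻¹ * a : MulAut G) x := by
        rw [← hax]; rfl
      rw [h1, h2] at hcomm
      obtain ⟨g, hg⟩ := hinv (b⁻¹ * a) (A.mul_mem (A.inv_mem hb) ha)
      rw [hg] at hcomm
      refine ⟨g⁻¹, ?_⟩
      rw [Subgroup.mem_centralizer_iff]
      rintro z hz
      rw [Set.mem_singleton_iff] at hz
      rw [hz]
      calc x * (g⁻¹⁻¹ * y * g⁻¹) = g * ((g⁻¹ * x * g) * y) * g⁻¹ := by group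
        _ = g * (y * (g⁻¹ * x * g)) * g⁻¹ := by rw [hcomm]
        _ = (g⁻¹⁻¹ * y * g⁻¹) * x := by group
  -- Step 2: x is central
  have hc : Subgroup.centralizer {x} = ⊤ := my_cover _ hcent
  have hxc : ∀ z : G, z * x = x * z := by
    intro z
    have hz : z ∈ Subgroup.centralizer {x} := hc ▸ Subgroup.mem_top z
    exact (Subgroup.mem_centralizer_iff.mp hz x rfl).symm
  -- Step 3: A fixes x
  have hfix : ∀ a ∈ A, a x = x := by
    intro a ha
    obtain ⟨g, hg⟩ := hinv a ha
    rw [hg, mul_assoc, ← hxc g, ← mul_assoc, inv_mul_cancel, one_mul]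
  -- a cyclic singleton closure
  have hsingle : IsCyclic (Subgroup.closure {x} : Subgroup G) := by
    rw [← Subgroup.zpowers_eq_closure]
    exact my_isCyclic_zpowers x
  -- Step 4: conclude
  intro y
  by_cases hy1 : y = 1
  · subst hy1
    have hpair : Subgroup.closure ({x, 1} : Set G) = Subgroup.closure {x} := by
      apply le_antisymm
      · rw [Subgroup.closure_le]
        rintro z (rfl | hz)
        · exact Subgroup.subset_closure rfl
        · rw [Set.mem_singleton_iff] at hz
          rw [hz]
          exact (Subgroup.closure {x}).one_mem
      · exact Subgroup.closure_mono (by simp)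
    rw [hpair]
    exact hsingle
  by_cases hT : vtx A y hy1 = vtx A x hx
  · have hy : y ∈ aorb A x := by
      have h0 : y ∈ aorb A y := ⟨1, A.one_mem, rfl⟩
      have hset : aorb A y = aorb A x := congrArg Subtype.val hT
      rwa [hset] at h0
    obtain ⟨a, ha, hax⟩ := hy
    have hyx : y = x := by rw [← hax, hfix a ha]
    rw [hyx, Set.pair_eq_singleton]
    exact hsingle
  · obtain ⟨hne, x', hx'mem, y', hy'mem, hcyc⟩ := huniv (vtx A y hy1) hT
    obtain ⟨a, ha, hax⟩ := hx'mem
    obtain ⟨b, hb, hby⟩ := hy'mem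
    have hcyc2 : IsCyclic
        (Subgroup.closure {(b⁻¹ : MulAut G) x', (b⁻¹ : MulAut G) y'} : Subgroup G) :=
      my_map b⁻¹ hcyc
    have h1 : (b⁻¹ : MulAut G) y' = y := by rw [← hby]; simp
    have h2 : (b⁻¹ : MulAut G) x' = x := by
      rw [← hax, hfix a ha]
      exact hfix b⁻¹ (A.inv_mem hb)
    rwa [h1, h2] at hcyc2
end

section
/- Let G be a finite group and let 1 ≠ x ∈ K(G), i.e., ⟨x,g⟩ is cyclic for all g ∈ G. Then for any A ≤ Aut(G), x^A is a universal vertex of Δ(G,A), and ⟨x⟩ is the unique subgroup of G of order equal to the order of x. -/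
open Subgroup

lemma helper {α : Type*} [Group α] [Fintype α] [IsCyclic α] [DecidableEq α]
    (a b : α) (h : b ^ orderOf a = 1) : b ∈ Subgroup.zpowers a := by
  have hm : 0 < orderOf a := orderOf_pos a
  have hle : (Finset.univ.filter fun c : α => c ^ orderOf a = 1).card ≤ orderOf a := by
    simpa [Finset.filter_congr_decidable] using IsCyclic.card_pow_eq_one_le (α := α) hm
  set s : Finset α := Finset.univ.filter (fun c : α => c ∈ Subgroup.zpowers a) with hs
  have hsub : s ⊆ Finset.univ.filter fun c : α => c ^ orderOf a = 1 := by
    intro y hy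
    rw [hs, Finset.mem_filter] at hy
    obtain ⟨k, rfl⟩ := hy.2
    simp only [Finset.mem_filter, Finset.mem_univ, true_and]
    rw [← zpow_natCast, ← zpow_mul, mul_comm, zpow_mul, zpow_natCast, pow_orderOf_eq_one,
      one_zpow]
  have hcard : s.card = orderOf a := by
    rw [hs, ← Fintype.card_subtype, ← Nat.card_eq_fintype_card]
    exact Nat.card_zpowers a
  have heq := Finset.eq_of_subset_of_card_le hsub (by omega)
  have : b ∈ s := heq ▸ (Finset.mem_filter.2 ⟨Finset.mem_univ _, h⟩)
  rw [hs, Finset.mem_filter] at this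
  exact this.2

theorem stmt12 {G : Type*} [Group G] [Finite G] (A : Subgroup (MulAut G))
    (x : G) (hx : x ≠ 1)
    (hK : ∀ g : G, IsCyclic (Subgroup.closure {x, g} : Subgroup G)) :
    (∀ T : DeltaVerts G A, T ≠ vtx A x hx → (Delta G A).Adj (vtx A x hx) T) ∧
      ∀ H : Subgroup G, Nat.card H = orderOf x → H = Subgroup.zpowers x := by
  constructor
  · rintro ⟨S, y, hy, rfl⟩ hT
    refine ⟨fun h => hT h.symm, x, ⟨1, A.one_mem, rfl⟩, y, ⟨1, A.one_mem, rfl⟩, hK y⟩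
  · intro H hH
    have hxle : Subgroup.zpowers x ≤ H → H = Subgroup.zpowers x := by
      intro hle
      exact (Subgroup.eq_of_le_of_card_ge hle (by rw [hH, Nat.card_zpowers])).symm
    -- instead show H ≤ zpowers x and use card
    have hle : H ≤ Subgroup.zpowers x := by
      intro h hh
      classical
      have : Fintype G := Fintype.ofFinite G
      set C : Subgroup G := Subgroup.closure {x, h} with hC
      haveI : IsCyclic C := hK h
      have hxC : x ∈ C := Subgroup.subset_closure (by simp)
      have hhC : h ∈ C := Subgroup.subset_closure (by simp)
      have hdvd : orderOf h ∣ orderOf x := by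
        rw [← hH]
        have := orderOf_dvd_natCard (⟨h, hh⟩ : H)
        rwa [← Subgroup.orderOf_coe] at this
      have hpow : (⟨h, hhC⟩ : C) ^ orderOf (⟨x, hxC⟩ : C) = 1 := by
        have : orderOf (⟨x, hxC⟩ : C) = orderOf x := (Subgroup.orderOf_coe _).symm
        rw [this]
        ext
        simpa using orderOf_dvd_iff_pow_eq_one.mp hdvd
      obtain ⟨k, hk⟩ := helper (⟨x, hxC⟩ : C) (⟨h, hhC⟩ : C) hpow
      exact ⟨k, by simpa using congrArg (Subtype.val) hk⟩
    exact Subgroup.eq_of_le_of_card_ge hle (by rw [hH, Nat.card_zpowers])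
end

section
/- Let G be a finite group and A ≤ Inn(G) a subgroup of its inner automorphism group. Then Δ(G,A) is a complete graph if and only if G is cyclic. -/
open Subgroup

/-- A finite group is not the union of the conjugates of a proper subgroup. -/
lemma cover_lemma {G : Type*} [Group G] [Finite G] (H : Subgroup G)
    (hcov : ∀ g : G, ∃ c : G, c * g * c⁻¹ ∈ H) : H = ⊤ := by
  classical
  cases nonempty_fintype G
  set N := normalizer (H : Set G) with hN
  set f : G → Finset G := fun c => (Finset.univ.filter (fun g => c⁻¹ * g * c ∈ H)).erase 1
    with hf
  have hconst : ∀ c n : G, n ∈ N → f (c * n) = f c := by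
    intro c n hn
    ext g
    simp only [hf, Finset.mem_erase, Finset.mem_filter, Finset.mem_univ, true_and,
      and_congr_right_iff]
    intro _
    have key : ∀ h : G, h ∈ H ↔ n⁻¹ * h * n ∈ H := Subgroup.mem_normalizer_iff''.mp hn
    rw [key (c⁻¹ * g * c)]
    constructor <;> intro hh <;> [skip; skip] <;>
      · convert hh using 1; group
  have hcard : ∀ c : G, (f c).card + 1 ≤ Nat.card H := by
    intro c
    have himg : (Finset.univ.filter (fun g => c⁻¹ * g * c ∈ H)) =
        Finset.image (fun h : H => c * (h : G) * c⁻¹) Finset.univ := by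
      ext g
      simp only [Finset.mem_filter, Finset.mem_univ, true_and, Finset.mem_image]
      constructor
      · intro hg
        refine ⟨⟨c⁻¹ * g * c, hg⟩, ?_⟩
        first
          | exact ⟨Finset.mem_univ _, by group⟩
          | group
      · intro hgim
        obtain ⟨h, rfl⟩ : ∃ h : H, c * (h : G) * c⁻¹ = g := by
          first
            | exact hgim
            | (obtain ⟨h, -, hh⟩ := hgim; exact ⟨h, hh⟩)
        convert h.2 using 1; group
    have h1mem : (1 : G) ∈ Finset.univ.filter (fun g => c⁻¹ * g * c ∈ H) := by
      simp [H.one_mem]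
    have hle : (Finset.univ.filter (fun g => c⁻¹ * g * c ∈ H)).card ≤ Nat.card H := by
      rw [himg, Nat.card_eq_fintype_card]
      exact (Finset.card_image_le).trans (le_of_eq (Finset.card_univ))
    have her : (f c).card + 1 = (Finset.univ.filter (fun g => c⁻¹ * g * c ∈ H)).card := by
      rw [hf]
      simp only []
      rw [Finset.card_erase_of_mem h1mem]
      have : 1 ≤ (Finset.univ.filter (fun g => c⁻¹ * g * c ∈ H)).card :=
        Finset.card_pos.mpr ⟨1, h1mem⟩
      omega
    omega
  -- covering by the finitely many conjugates indexed by G ⧸ N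
  have hcover : (Finset.univ : Finset G) ⊆
      insert (1 : G) (Finset.biUnion Finset.univ (fun q : G ⧸ N => f q.out)) := by
    intro g _
    by_cases hg : g = 1
    · simp [hg]
    obtain ⟨c, hc⟩ := hcov g
    have hmem : g ∈ f c⁻¹ := by
      simp only [hf, Finset.mem_erase, Finset.mem_filter, Finset.mem_univ, true_and]
      refine ⟨hg, ?_⟩
      convert hc using 1; group
    obtain ⟨n, hn⟩ := QuotientGroup.mk_out_eq_mul N c⁻¹
    have : f ((QuotientGroup.mk c⁻¹ : G ⧸ N).out) = f c⁻¹ := by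
      rw [hn]; exact hconst c⁻¹ n n.2
    refine Finset.mem_insert_of_mem (Finset.mem_biUnion.mpr ⟨QuotientGroup.mk c⁻¹,
      Finset.mem_univ _, ?_⟩)
    rw [this]; exact hmem
  have hcount : Nat.card G ≤ 1 + N.index * (Nat.card H - 1) := by
    have h1 : (Finset.univ : Finset G).card ≤
        1 + (Finset.biUnion Finset.univ (fun q : G ⧸ N => f q.out)).card := by
      calc (Finset.univ : Finset G).card
          ≤ (insert (1 : G) (Finset.biUnion Finset.univ (fun q : G ⧸ N => f q.out))).card :=
            Finset.card_le_card hcover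
        _ ≤ _ + 1 := Finset.card_insert_le _ _
        _ = 1 + _ := by omega
    have h2 : (Finset.biUnion Finset.univ (fun q : G ⧸ N => f q.out)).card ≤
        N.index * (Nat.card H - 1) := by
      calc (Finset.biUnion Finset.univ (fun q : G ⧸ N => f q.out)).card
          ≤ ∑ q : G ⧸ N, (f q.out).card := Finset.card_biUnion_le
        _ ≤ ∑ _q : G ⧸ N, (Nat.card H - 1) := Finset.sum_le_sum (fun q _ => by
            have := hcard q.out; omega)
        _ = Fintype.card (G ⧸ N) * (Nat.card H - 1) := by
            rw [Finset.sum_const, Finset.card_univ, smul_eq_mul]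
        _ = N.index * (Nat.card H - 1) := by
            rw [← Nat.card_eq_fintype_card]; rfl
    rw [Nat.card_eq_fintype_card, ← Finset.card_univ]
    omega
  -- arithmetic conclusion
  have hHle : H ≤ N := le_normalizer
  have hdvd : N.index ∣ H.index := index_dvd_of_le hHle
  have hHpos : H.index ≠ 0 := H.index_ne_zero_of_finite
  have hNle : N.index ≤ H.index := Nat.le_of_dvd (Nat.pos_of_ne_zero hHpos) hdvd
  have hcardmul : Nat.card H * H.index = Nat.card G := H.card_mul_index
  have hHcardpos : 0 < Nat.card H := Nat.card_pos
  rw [← index_eq_one]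
  by_contra hne
  have hge2 : 2 ≤ H.index := by omega
  obtain ⟨m, hm⟩ : ∃ m, Nat.card H = m + 1 := ⟨Nat.card H - 1, by omega⟩
  have : Nat.card G ≤ 1 + H.index * (Nat.card H - 1) := by
    calc Nat.card G ≤ 1 + N.index * (Nat.card H - 1) := hcount
      _ ≤ 1 + H.index * (Nat.card H - 1) := by
          have := Nat.mul_le_mul_right (Nat.card H - 1) hNle; omega
  rw [hm] at this hcardmul
  simp only [Nat.add_sub_cancel] at this
  have hmul : (m + 1) * H.index = m * H.index + H.index := by ring
  have hmul2 : H.index * m = m * H.index := by ring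
  omega

theorem stmt15 {G : Type*} [Group G] [Finite G] (A : Subgroup (MulAut G))
    (hA : A ≤ (MulAut.conj : G →* MulAut G).range) :
    (∀ u v : DeltaVerts G A, u ≠ v → (Delta G A).Adj u v) ↔ IsCyclic G := by
  constructor
  · intro h
    by_cases htriv : ∀ g : G, g = 1
    · exact ⟨1, fun y => (htriv y).symm ▸ Subgroup.one_mem (zpowers (1 : G))⟩
    push_neg at htriv
    obtain ⟨g₀, hg₀⟩ := htriv
    obtain ⟨x₀, hx₀max⟩ := Finite.exists_max (fun g : G => orderOf g)
    have hx₀ : x₀ ≠ 1 := by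
      intro hx
      have hpos : 0 < orderOf g₀ := orderOf_pos g₀
      have := hx₀max g₀
      rw [hx, orderOf_one] at this
      exact hg₀ (orderOf_eq_one_iff.mp (by omega))
    -- every element lies in a conjugate of zpowers x₀
    have hcov : ∀ g : G, ∃ c : G, c * g * c⁻¹ ∈ zpowers x₀ := by
      intro g
      by_cases hg : g = 1
      · refine ⟨1, ?_⟩
        rw [hg]
        have h11 : (1 : G) * 1 * (1 : G)⁻¹ = 1 := by group
        rw [h11]
        exact Subgroup.one_mem _
      by_cases horb : aorb A x₀ = aorb A g
      · -- g is in the A-orbit of x₀, hence conjugate to x₀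
        have hgmem : g ∈ aorb A x₀ := by
          rw [horb]; exact ⟨1, A.one_mem, rfl⟩
        obtain ⟨a, haA, hax⟩ := hgmem
        obtain ⟨c, hc⟩ := hA haA
        refine ⟨c⁻¹, ?_⟩
        have : g = c * x₀ * c⁻¹ := by rw [← hax, ← hc]; rfl
        rw [this]
        have : c⁻¹ * (c * x₀ * c⁻¹) * c⁻¹⁻¹ = x₀ := by group
        rw [this]
        exact mem_zpowers x₀
      · -- distinct vertices: use completeness
        have hne : vtx A x₀ hx₀ ≠ vtx A g hg := by
          intro heq
          exact horb (congrArg Subtype.val heq)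
        obtain ⟨-, x', hx', y', hy', hcyc⟩ := h _ _ hne
        obtain ⟨a, haA, hax⟩ := hx'
        obtain ⟨b, hbA, hbg⟩ := hy'
        obtain ⟨c, hc⟩ := hA haA
        obtain ⟨d, hd⟩ := hA hbA
        have hx'c : x' = c * x₀ * c⁻¹ := by rw [← hax, ← hc]; rfl
        have hy'd : y' = d * g * d⁻¹ := by rw [← hbg, ← hd]; rfl
        have hordx' : orderOf x' = orderOf x₀ := by
          rw [← hax, ← hc]
          exact orderOf_injective (MulAut.conj c : MulAut G).toMonoidHom
            (MulEquiv.injective _) x₀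
        set K := Subgroup.closure ({x', y'} : Set G) with hK
        have hx'K : x' ∈ K := Subgroup.subset_closure (Set.mem_insert _ _)
        have hy'K : y' ∈ K := Subgroup.subset_closure (Set.mem_insert_of_mem _ rfl)
        -- K is cyclic with a generator z; card K = orderOf z ≤ orderOf x₀
        obtain ⟨z, hz⟩ := hcyc
        have hztop : (zpowers z : Subgroup K) = ⊤ :=
          eq_top_iff.mpr (fun w _ => hz w)
        have hcardK : Nat.card K = orderOf z := by
          rw [← Nat.card_zpowers, hztop]
          exact (Nat.card_congr (Equiv.Set.univ _)).symm.trans rfl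
        have hzle : orderOf z ≤ orderOf x₀ := by
          rw [← Subgroup.orderOf_coe z]
          exact hx₀max _
        have hdvdK : orderOf x' ∣ Nat.card K :=
          K.orderOf_dvd_natCard hx'K
        have hKpos : 0 < Nat.card K := Nat.card_pos
        have hcardeq : Nat.card K = orderOf x' := by
          have h1 : orderOf x' ≤ Nat.card K := Nat.le_of_dvd hKpos hdvdK
          have h2 : Nat.card K ≤ orderOf x' := by rw [hcardK, hordx']; omega
          omega
        -- hence x' generates K
        have hgen : (zpowers (⟨x', hx'K⟩ : K) : Subgroup K) = ⊤ := by
          apply Subgroup.eq_top_of_card_eq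
          rw [Nat.card_zpowers, Subgroup.orderOf_mk, hcardeq]
        have hy'pow : (⟨y', hy'K⟩ : K) ∈ zpowers (⟨x', hx'K⟩ : K) := by
          rw [hgen]; trivial
        obtain ⟨k, hk⟩ := Subgroup.mem_zpowers_iff.mp hy'pow
        have hk' : x' ^ k = y' := by
          have := congrArg (Subtype.val : K → G) hk
          simpa using this
        -- unfold conjugations
        refine ⟨c⁻¹ * d, ?_⟩
        have : (c⁻¹ * d) * g * (c⁻¹ * d)⁻¹ = c⁻¹ * (d * g * d⁻¹) * c := by group
        rw [this, ← hy'd, ← hk', hx'c]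
        refine Subgroup.mem_zpowers_iff.mpr ⟨k, ?_⟩
        rw [show (c * x₀ * c⁻¹ : G) = MulAut.conj c x₀ from by simp [MulAut.conj_apply],
          ← map_zpow]
        simp [MulAut.conj_apply, mul_assoc]
    have htop : zpowers x₀ = ⊤ := cover_lemma _ hcov
    refine ⟨x₀, fun y => ?_⟩
    have : y ∈ zpowers x₀ := htop.symm ▸ Subgroup.mem_top y
    exact Subgroup.mem_zpowers_iff.mp this
  · intro hG u v huv
    refine ⟨huv, ?_⟩
    obtain ⟨x, hx1, hxS⟩ := u.2
    obtain ⟨y, hy1, hyT⟩ := v.2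
    refine ⟨x, ?_, y, ?_, ?_⟩
    · rw [hxS]; exact ⟨1, A.one_mem, rfl⟩
    · rw [hyT]; exact ⟨1, A.one_mem, rfl⟩
    · exact Subgroup.isCyclic _
end
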